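/- For m ∈ ℝ and v ≥ 0, let N(m, v) denote the Gaussian probability measure on ℝ with mean m and variance v (the Dirac mass at m if v = 0). Define W₂²(μ, ν) as the infimum over all couplings π of μ and ν of ∫_{ℝ×ℝ} (x − y)² dπ(x, y). Then for all m_a, m_b, m_γ ∈ ℝ, all σ_a, σ_b, σ_γ ≥ 0, and all p_a, p_b ∈ [0, 1]: W₂²(N(m_a + m_γ, σ_a² + p_a²σ_γ²), N(m_b + m_γ, σ_b² + p_b²σ_γ²)) ≤ W₂²(N(m_a, σ_a²), N(m_b, σ_b²)) + σ_γ²·(p_a − p_b)². -/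

import Mathlib

open MeasureTheory ProbabilityTheory

/-- The squared 2-Wasserstein distance between probability measures on `ℝ`: the infimum over all
couplings `π` of `μ` and `ν` of `∫ (x − y)² dπ(x, y)`. -/
noncomputable def W2sq (μ ν : Measure ℝ) : ℝ :=
  sInf {r : ℝ | ∃ π : Measure (ℝ × ℝ), IsProbabilityMeasure π ∧
    π.map Prod.fst = μ ∧ π.map Prod.snd = ν ∧ r = ∫ p : ℝ × ℝ, (p.1 - p.2) ^ 2 ∂π}

open scoped ENNReal NNReal

section Auxiliary

open Real


-- integral against std normal as weighted Lebesgue integral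
lemma std_integral (g : ℝ → ℝ) :
    ∫ x, g x ∂(gaussianReal 0 1) = ∫ x, gaussianPDFReal 0 1 x * g x := by
  rw [gaussianReal_of_var_ne_zero _ one_ne_zero]
  have : gaussianPDF 0 1 = fun x => ((gaussianPDFReal 0 1 x).toNNReal : ℝ≥0∞) := by
    ext x; simp [gaussianPDF, ENNReal.ofReal]
  rw [this, integral_withDensity_eq_integral_smul ((measurable_gaussianPDFReal 0 1).real_toNNReal) g]
  congr 1; ext x
  simp [NNReal.smul_def, Real.coe_toNNReal _ (gaussianPDFReal_nonneg 0 1 x)]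

lemma std_integrable_iff (g : ℝ → ℝ) (hg : Measurable g) :
    Integrable g (gaussianReal 0 1) ↔ Integrable (fun x => gaussianPDFReal 0 1 x * g x) := by
  rw [gaussianReal_of_var_ne_zero _ one_ne_zero]
  have : gaussianPDF 0 1 = fun x => ((gaussianPDFReal 0 1 x).toNNReal : ℝ≥0∞) := by
    ext x; simp [gaussianPDF, ENNReal.ofReal]
  rw [this, integrable_withDensity_iff_integrable_smul ((measurable_gaussianPDFReal 0 1).real_toNNReal)]
  constructor <;> intro h <;> [skip; skip] <;>
  · refine h.congr (Filter.Eventually.of_forall fun x => ?_)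
    simp [NNReal.smul_def, Real.coe_toNNReal _ (gaussianPDFReal_nonneg 0 1 x)]

lemma pdf01 (x : ℝ) : gaussianPDFReal 0 1 x = (√(2*π))⁻¹ * rexp (-(1/2) * x^2) := by
  simp only [gaussianPDFReal, NNReal.coe_one, mul_one, sub_zero]
  ring_nf

lemma pdf01_even (x : ℝ) : gaussianPDFReal 0 1 (-x) = gaussianPDFReal 0 1 x := by
  simp [pdf01]

lemma int_pdf_mul_pow (n : ℕ) : Integrable (fun x => gaussianPDFReal 0 1 x * x ^ n) := by
  have h := (integrable_rpow_mul_exp_neg_mul_sq (b := 1/2) (by norm_num)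
      (s := (n:ℝ)) (lt_of_lt_of_le neg_one_lt_zero (Nat.cast_nonneg n))).const_mul (√(2*π))⁻¹
  refine h.congr (Filter.Eventually.of_forall fun x => ?_)
  simp only [Real.rpow_natCast, pdf01]
  ring

lemma key_integral : ∫ x : ℝ, x^2 * rexp (-(1/2) * x^2) = √(2*π) := by
  have hint : Integrable (fun x : ℝ => x^2 * rexp (-(1/2) * x^2)) := by
    have h := integrable_rpow_mul_exp_neg_mul_sq (b := 1/2) (by norm_num) (s := (2:ℝ)) (by norm_num)
    refine h.congr (Filter.Eventually.of_forall fun x => ?_)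
    simp only [Real.rpow_two]
  have hIoi : ∫ x in Set.Ioi (0:ℝ), x^2 * rexp (-(1/2) * x^2) = √(2*π) / 2 := by
    have h := integral_rpow_mul_exp_neg_mul_rpow (p := 2) (q := 2) (b := 1/2)
      (by norm_num) (by norm_num) (by norm_num)
    rw [show ∫ x in Set.Ioi (0:ℝ), x^2 * rexp (-(1/2) * x^2)
        = ∫ x in Set.Ioi (0:ℝ), x ^ (2:ℝ) * rexp (-(1/2) * x ^ (2:ℝ)) by
      refine setIntegral_congr_fun measurableSet_Ioi (fun x _ => ?_)
      rw [Real.rpow_two], h]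
    have h2 : ((1:ℝ)/2) ^ (-(2+1)/2 : ℝ) = 2 * √2 := by
      rw [show (1:ℝ)/2 = 2⁻¹ by norm_num, Real.inv_rpow (by norm_num), ← Real.rpow_neg (by norm_num)]
      norm_num
      rw [show (3/2 : ℝ) = 1 + 1/2 by norm_num, Real.rpow_add two_pos, Real.rpow_one,
        ← Real.sqrt_eq_rpow]
    have h3 : Real.Gamma ((2+1)/2) = √π / 2 := by
      rw [show ((2:ℝ)+1)/2 = 1/2 + 1 by norm_num, Real.Gamma_add_one (by norm_num),
        Real.Gamma_one_half_eq]
      ring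
    rw [h2, h3, Real.sqrt_mul (by norm_num)]
    have : √2 * √2 = 2 := Real.mul_self_sqrt (by norm_num)
    nlinarith [Real.sqrt_nonneg (2:ℝ), Real.sqrt_nonneg π]
  have hIic : ∫ x in Set.Iic (0:ℝ), x^2 * rexp (-(1/2) * x^2) = √(2*π) / 2 := by
    have h := integral_comp_neg_Iic (0:ℝ) (fun x => x^2 * rexp (-(1/2) * x^2))
    simp only [neg_sq, neg_zero] at h
    rw [h, hIoi]
  rw [← intervalIntegral.integral_Iic_add_Ioi (b := 0) hint.integrableOn hint.integrableOn, hIic, hIoi]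
  ring

lemma std_int_pow (n : ℕ) : Integrable (fun x => x ^ n) (gaussianReal 0 1) := by
  exact (std_integrable_iff _ ((measurable_id.pow_const n : Measurable fun x : ℝ => x ^ n))).mpr
    (int_pdf_mul_pow n)

lemma std_mean : ∫ x, x ∂(gaussianReal 0 1) = 0 := by
  rw [std_integral]
  have h := integral_neg_eq_self (fun x => gaussianPDFReal 0 1 x * x) (volume : Measure ℝ)
  simp only [pdf01_even, mul_neg] at h
  rw [integral_neg] at h
  linarith

lemma std_var : ∫ x, x ^ 2 ∂(gaussianReal 0 1) = 1 := by
  rw [std_integral]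
  have : (fun x => gaussianPDFReal 0 1 x * x ^ 2)
      = fun x => (√(2*π))⁻¹ * (x ^ 2 * rexp (-(1/2) * x^2)) := by
    funext x; rw [pdf01]; ring
  rw [this, integral_const_mul, key_integral, inv_mul_cancel₀]
  positivity

lemma gauss_eq_map (m : ℝ) (v : ℝ≥0) :
    gaussianReal m v = (gaussianReal 0 1).map (fun z => m + √(v:ℝ) * z) := by
  have h1 : (gaussianReal 0 1).map (√(v:ℝ) * ·) = gaussianReal 0 v := by
    rw [gaussianReal_map_const_mul]
    congr 1
    · ring
    · rw [mul_one]
      ext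
      simp [Real.sq_sqrt v.coe_nonneg]
  have h2 : (fun z : ℝ => m + √(v:ℝ) * z) = (fun y => y + m) ∘ (√(v:ℝ) * ·) := by
    funext z; simp [add_comm]
  have hg : Measurable (fun y : ℝ => y + m) := by fun_prop
  have hf : Measurable (fun x : ℝ => √(v:ℝ) * x) := by fun_prop
  rw [h2, ← Measure.map_map hg hf, h1, gaussianReal_map_add_const, zero_add]

lemma std_int_mul (c : ℝ) : Integrable (fun z : ℝ => c * z) (gaussianReal 0 1) := by
  have := (std_int_pow 1).const_mul c
  simpa using this

lemma int_id_gauss (m : ℝ) (v : ℝ≥0) : Integrable (fun x => x) (gaussianReal m v) := by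
  rw [gauss_eq_map]
  have haff : Measurable (fun z : ℝ => m + √(v:ℝ) * z) := by fun_prop
  rw [integrable_map_measure measurable_id'.aestronglyMeasurable haff.aemeasurable]
  simp only [Function.comp_def, id_eq]
  exact (integrable_const m).add (std_int_mul _)

lemma int_sq_gauss (m c : ℝ) (v : ℝ≥0) :
    Integrable (fun x => (x - c) ^ 2) (gaussianReal m v) := by
  rw [gauss_eq_map]
  have haff : Measurable (fun z : ℝ => m + √(v:ℝ) * z) := by fun_prop
  rw [integrable_map_measure ((measurable_id'.sub_const c).pow_const 2).aestronglyMeasurable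
    haff.aemeasurable]
  have : ((fun x => (x - c) ^ 2) ∘ fun z : ℝ => m + √(v:ℝ) * z)
      = fun z => ((m - c)^2 + (2*(m - c)*√(v:ℝ)) * z) + ((√(v:ℝ))^2) * z^2 := by
    funext z; simp only [Function.comp_apply]; ring
  rw [this]
  exact ((integrable_const _).add (std_int_mul _)).add ((std_int_pow 2).const_mul _)

lemma mean_gauss (m : ℝ) (v : ℝ≥0) : ∫ x, x ∂(gaussianReal m v) = m := by
  rw [gauss_eq_map]
  have haff : Measurable (fun z : ℝ => m + √(v:ℝ) * z) := by fun_prop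
  rw [integral_map haff.aemeasurable measurable_id'.aestronglyMeasurable]

  rw [integral_add (integrable_const m) (std_int_mul _), integral_const, integral_const_mul]
  simp [std_mean]

lemma var_gauss (m : ℝ) (v : ℝ≥0) : ∫ x, (x - m) ^ 2 ∂(gaussianReal m v) = v := by
  rw [gauss_eq_map]
  have haff : Measurable (fun z : ℝ => m + √(v:ℝ) * z) := by fun_prop
  rw [integral_map haff.aemeasurable
    ((measurable_id'.sub_const m).pow_const 2).aestronglyMeasurable]
  have : (fun z : ℝ => (m + √(v:ℝ) * z - m) ^ 2) = fun z : ℝ => ((√(v:ℝ))^2) * z^2 := by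
    funext z; ring

  rw [this, integral_const_mul, std_var, Real.sq_sqrt v.coe_nonneg, mul_one]

lemma w2_coupling (m1 m2 : ℝ) (v1 v2 : ℝ≥0) :
    ∃ P : Measure (ℝ × ℝ), IsProbabilityMeasure P ∧
      P.map Prod.fst = gaussianReal m1 v1 ∧ P.map Prod.snd = gaussianReal m2 v2 ∧
      (∫ p : ℝ × ℝ, (p.1 - p.2) ^ 2 ∂P)
        = (m1 - m2) ^ 2 + (√(v1:ℝ) - √(v2:ℝ)) ^ 2 := by
  have hT : Measurable (fun z : ℝ => (m1 + √(v1:ℝ) * z, m2 + √(v2:ℝ) * z)) := by fun_prop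
  refine ⟨(gaussianReal 0 1).map (fun z => (m1 + √(v1:ℝ) * z, m2 + √(v2:ℝ) * z)),
    Measure.isProbabilityMeasure_map hT.aemeasurable, ?_, ?_, ?_⟩
  · rw [Measure.map_map measurable_fst hT]
    exact (gauss_eq_map m1 v1).symm
  · rw [Measure.map_map measurable_snd hT]
    exact (gauss_eq_map m2 v2).symm
  · rw [integral_map (f := fun p : ℝ × ℝ => (p.1 - p.2) ^ 2) hT.aemeasurable
      ((measurable_fst.sub measurable_snd).pow_const 2).aestronglyMeasurable]
    calc ∫ z, ((m1 + √(v1:ℝ) * z) - (m2 + √(v2:ℝ) * z)) ^ 2 ∂(gaussianReal 0 1)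
        = ∫ z, (((m1 - m2) ^ 2 + (2 * (m1 - m2) * (√(v1:ℝ) - √(v2:ℝ))) * z)
            + ((√(v1:ℝ) - √(v2:ℝ)) ^ 2) * z ^ 2) ∂(gaussianReal 0 1) := by
          congr 1; funext z; ring
      _ = (m1 - m2) ^ 2 + (√(v1:ℝ) - √(v2:ℝ)) ^ 2 := by
          have i0 : Integrable (fun z : ℝ => (m1 - m2) ^ 2
              + (2 * (m1 - m2) * (√(v1:ℝ) - √(v2:ℝ))) * z) (gaussianReal 0 1) :=
            (integrable_const _).add (std_int_mul _)
          have i1 : Integrable (fun z : ℝ => ((√(v1:ℝ) - √(v2:ℝ)) ^ 2) * z ^ 2)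
              (gaussianReal 0 1) := (std_int_pow 2).const_mul _
          rw [integral_add i0 i1,
            integral_add (integrable_const ((m1 - m2) ^ 2)) (std_int_mul _),
            integral_const, integral_const_mul, integral_const_mul, std_var,
            show ∫ z : ℝ, z ∂(gaussianReal 0 1) = 0 from std_mean]
          simp

lemma w2_lower (m1 m2 : ℝ) (v1 v2 : ℝ≥0) (P : Measure (ℝ × ℝ)) (hP : IsProbabilityMeasure P)
    (h1 : P.map Prod.fst = gaussianReal m1 v1) (h2 : P.map Prod.snd = gaussianReal m2 v2) :
    (m1 - m2) ^ 2 + (√(v1:ℝ) - √(v2:ℝ)) ^ 2 ≤ ∫ p : ℝ × ℝ, (p.1 - p.2) ^ 2 ∂P := by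
  -- integrability of first coordinate and its square
  have hA1 : Integrable (fun p : ℝ × ℝ => p.1 - m1) P := by
    have h := int_id_gauss m1 v1
    rw [← h1, integrable_map_measure measurable_id'.aestronglyMeasurable
      measurable_fst.aemeasurable] at h
    exact h.sub (integrable_const m1)
  have hB1 : Integrable (fun p : ℝ × ℝ => p.2 - m2) P := by
    have h := int_id_gauss m2 v2
    rw [← h2, integrable_map_measure measurable_id'.aestronglyMeasurable
      measurable_snd.aemeasurable] at h
    exact h.sub (integrable_const m2)
  have hA2 : Integrable (fun p : ℝ × ℝ => (p.1 - m1) ^ 2) P := by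
    have h := int_sq_gauss m1 m1 v1
    rw [← h1, integrable_map_measure ((measurable_id'.sub_const m1).pow_const 2).aestronglyMeasurable
      measurable_fst.aemeasurable] at h
    exact h
  have hB2 : Integrable (fun p : ℝ × ℝ => (p.2 - m2) ^ 2) P := by
    have h := int_sq_gauss m2 m2 v2
    rw [← h2, integrable_map_measure ((measurable_id'.sub_const m2).pow_const 2).aestronglyMeasurable
      measurable_snd.aemeasurable] at h
    exact h
  have hAB : Integrable (fun p : ℝ × ℝ => (p.1 - m1) * (p.2 - m2)) P := by
    have ig : Integrable (fun p : ℝ × ℝ => (1/2 : ℝ) * ((p.1 - m1) ^ 2 + (p.2 - m2) ^ 2)) P :=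
      (hA2.add hB2).const_mul _
    refine Integrable.mono' ig ?_ (Filter.Eventually.of_forall fun p => ?_)
    · exact ((measurable_fst.sub_const m1).mul (measurable_snd.sub_const m2)).aestronglyMeasurable
    · rw [Real.norm_eq_abs, abs_le]
      constructor <;>
        nlinarith [sq_nonneg (p.1 - m1 + (p.2 - m2)), sq_nonneg (p.1 - m1 - (p.2 - m2))]
  -- moment values
  have hEA1 : ∫ p : ℝ × ℝ, (p.1 - m1) ∂P = 0 := by
    have h := mean_gauss m1 v1
    rw [← h1, integral_map measurable_fst.aemeasurable
      measurable_id'.aestronglyMeasurable] at h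
    have hX : Integrable (fun p : ℝ × ℝ => p.1) P := by
      exact (hA1.add (integrable_const m1)).congr
        (Filter.Eventually.of_forall fun p => by simp)
    rw [integral_sub hX (integrable_const m1), integral_const]
    simp [h]
  have hEB1 : ∫ p : ℝ × ℝ, (p.2 - m2) ∂P = 0 := by
    have h := mean_gauss m2 v2
    rw [← h2, integral_map measurable_snd.aemeasurable
      measurable_id'.aestronglyMeasurable] at h
    have hX : Integrable (fun p : ℝ × ℝ => p.2) P := by
      exact (hB1.add (integrable_const m2)).congr
        (Filter.Eventually.of_forall fun p => by simp)
    rw [integral_sub hX (integrable_const m2), integral_const]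
    simp [h]
  have hEA2 : ∫ p : ℝ × ℝ, (p.1 - m1) ^ 2 ∂P = v1 := by
    have h := var_gauss m1 v1
    rw [← h1, integral_map measurable_fst.aemeasurable
      ((measurable_id'.sub_const m1).pow_const 2).aestronglyMeasurable] at h
    exact h
  have hEB2 : ∫ p : ℝ × ℝ, (p.2 - m2) ^ 2 ∂P = v2 := by
    have h := var_gauss m2 v2
    rw [← h2, integral_map measurable_snd.aemeasurable
      ((measurable_id'.sub_const m2).pow_const 2).aestronglyMeasurable] at h
    exact h
  -- covariance bound
  have hcov : ∫ p : ℝ × ℝ, (p.1 - m1) * (p.2 - m2) ∂P ≤ √(v1:ℝ) * √(v2:ℝ) := by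
    by_cases hv1 : v1 = 0
    · have hae : ∀ᵐ p : ℝ × ℝ ∂P, p.1 = m1 := by
        have hs : MeasurableSet ({m1}ᶜ : Set ℝ) := (measurableSet_singleton m1).compl
        have : P.map Prod.fst ({m1}ᶜ : Set ℝ) = 0 := by
          rw [h1, hv1, gaussianReal_zero_var, Measure.dirac_apply' _ hs]
          simp
        rw [Measure.map_apply measurable_fst hs] at this
        rw [ae_iff]
        exact this
      have : ∫ p : ℝ × ℝ, (p.1 - m1) * (p.2 - m2) ∂P = 0 := by
        rw [integral_congr_ae (g := fun _ => (0:ℝ))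
          (hae.mono fun p hp => by rw [hp]; ring), integral_zero]
      rw [this, hv1]
      positivity
    by_cases hv2 : v2 = 0
    · have hae : ∀ᵐ p : ℝ × ℝ ∂P, p.2 = m2 := by
        have hs : MeasurableSet ({m2}ᶜ : Set ℝ) := (measurableSet_singleton m2).compl
        have : P.map Prod.snd ({m2}ᶜ : Set ℝ) = 0 := by
          rw [h2, hv2, gaussianReal_zero_var, Measure.dirac_apply' _ hs]
          simp
        rw [Measure.map_apply measurable_snd hs] at this
        rw [ae_iff]
        exact this
      have : ∫ p : ℝ × ℝ, (p.1 - m1) * (p.2 - m2) ∂P = 0 := by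
        rw [integral_congr_ae (g := fun _ => (0:ℝ))
          (hae.mono fun p hp => by rw [hp]; ring), integral_zero]
      rw [this, hv2]
      positivity
    · have hs1 : (0:ℝ) < √(v1:ℝ) := Real.sqrt_pos.mpr (by exact_mod_cast pos_iff_ne_zero.mpr hv1)
      have hs2 : (0:ℝ) < √(v2:ℝ) := Real.sqrt_pos.mpr (by exact_mod_cast pos_iff_ne_zero.mpr hv2)
      set s : ℝ := √(v2:ℝ) / √(v1:ℝ) with hs
      have hspos : 0 < s := div_pos hs2 hs1
      have hpt : ∀ p : ℝ × ℝ, (p.1 - m1) * (p.2 - m2)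
          ≤ (1/2) * (s * (p.1 - m1) ^ 2 + s⁻¹ * (p.2 - m2) ^ 2) := by
        intro p
        nlinarith [sq_nonneg (s * (p.1 - m1) - (p.2 - m2)), hspos,
          mul_inv_cancel₀ (ne_of_gt hspos), mul_pos hspos hspos]
      have hint : ∫ p : ℝ × ℝ, (p.1 - m1) * (p.2 - m2) ∂P
          ≤ ∫ p : ℝ × ℝ, (1/2) * (s * (p.1 - m1) ^ 2 + s⁻¹ * (p.2 - m2) ^ 2) ∂P :=
        integral_mono hAB (((hA2.const_mul s).add (hB2.const_mul s⁻¹)).const_mul _) hpt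
      refine hint.trans ?_
      rw [integral_const_mul, integral_add (hA2.const_mul s) (hB2.const_mul s⁻¹),
        integral_const_mul, integral_const_mul, hEA2, hEB2]
      have hv1' : (v1:ℝ) = √(v1:ℝ) * √(v1:ℝ) := (Real.mul_self_sqrt v1.coe_nonneg).symm
      have hv2' : (v2:ℝ) = √(v2:ℝ) * √(v2:ℝ) := (Real.mul_self_sqrt v2.coe_nonneg).symm
      have heq : (1/2 : ℝ) * (s * (v1:ℝ) + s⁻¹ * (v2:ℝ)) = √(v1:ℝ) * √(v2:ℝ) := by
        rw [hs]
        field_simp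
        nlinarith [hv1', hv2', hs1, hs2]
      exact le_of_eq heq
  -- expansion of the cost
  have hexp : (fun p : ℝ × ℝ => (p.1 - p.2) ^ 2)
      = fun p : ℝ × ℝ => (((p.1 - m1) ^ 2 + (p.2 - m2) ^ 2)
          - 2 * ((p.1 - m1) * (p.2 - m2)))
        + ((2 * (m1 - m2)) * ((p.1 - m1) - (p.2 - m2)) + (m1 - m2) ^ 2) := by
    funext p; ring
  rw [hexp]
  have hSum : Integrable (fun p : ℝ × ℝ => (p.1 - m1) ^ 2 + (p.2 - m2) ^ 2) P := hA2.add hB2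
  have hDiff : Integrable (fun p : ℝ × ℝ => (p.1 - m1) - (p.2 - m2)) P := hA1.sub hB1
  have iL : Integrable (fun p : ℝ × ℝ => ((p.1 - m1) ^ 2 + (p.2 - m2) ^ 2)
      - 2 * ((p.1 - m1) * (p.2 - m2))) P := hSum.sub (hAB.const_mul 2)
  have iR : Integrable (fun p : ℝ × ℝ => (2 * (m1 - m2)) * ((p.1 - m1) - (p.2 - m2))
      + (m1 - m2) ^ 2) P := (hDiff.const_mul _).add (integrable_const _)
  rw [integral_add iL iR, integral_sub hSum (hAB.const_mul 2),
    integral_add hA2 hB2, integral_const_mul,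
    integral_add (hDiff.const_mul _) (integrable_const _),
    integral_const_mul, integral_sub hA1 hB1, integral_const,
    hEA1, hEB1, hEA2, hEB2]
  simp only [measure_univ, probReal_univ, ENNReal.toReal_one, one_smul, sub_zero, mul_zero, zero_add]
  nlinarith [hcov, Real.mul_self_sqrt v1.coe_nonneg, Real.mul_self_sqrt v2.coe_nonneg]

lemma W2sq_gaussian (m1 m2 : ℝ) (v1 v2 : ℝ≥0) :
    W2sq (gaussianReal m1 v1) (gaussianReal m2 v2)
      = (m1 - m2) ^ 2 + (√(v1:ℝ) - √(v2:ℝ)) ^ 2 := by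
  obtain ⟨P, hP, hfst, hsnd, hcost⟩ := w2_coupling m1 m2 v1 v2
  refine le_antisymm (csInf_le ⟨0, fun r hr => ?_⟩ ⟨P, hP, hfst, hsnd, hcost.symm⟩)
    (le_csInf ⟨_, P, hP, hfst, hsnd, hcost.symm⟩ ?_)
  · obtain ⟨Q, hQ, -, -, rfl⟩ := hr
    exact integral_nonneg fun p => sq_nonneg _
  · rintro r ⟨Q, hQ, hq1, hq2, rfl⟩
    exact w2_lower m1 m2 v1 v2 Q hQ hq1 hq2

end Auxiliary

/-- For all means `m_a, m_b, m_γ ∈ ℝ`, standard deviations `σ_a, σ_b, σ_γ ≥ 0`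
and weights `p_a, p_b ∈ [0, 1]`:
`W₂²(N(m_a + m_γ, σ_a² + p_a²σ_γ²), N(m_b + m_γ, σ_b² + p_b²σ_γ²))
  ≤ W₂²(N(m_a, σ_a²), N(m_b, σ_b²)) + σ_γ²·(p_a − p_b)²`. -/
theorem gaussian_interpolation_upper_bound
    (ma mb mγ : ℝ) (σa σb σγ : ℝ) (hσa : 0 ≤ σa) (hσb : 0 ≤ σb) (hσγ : 0 ≤ σγ)
    (pa pb : ℝ) (hpa : pa ∈ Set.Icc (0 : ℝ) 1) (hpb : pb ∈ Set.Icc (0 : ℝ) 1) :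
    W2sq (gaussianReal (ma + mγ) ((σa ^ 2 + pa ^ 2 * σγ ^ 2).toNNReal))
        (gaussianReal (mb + mγ) ((σb ^ 2 + pb ^ 2 * σγ ^ 2).toNNReal))
      ≤ W2sq (gaussianReal ma ((σa ^ 2).toNNReal)) (gaussianReal mb ((σb ^ 2).toNNReal))
        + σγ ^ 2 * (pa - pb) ^ 2 := by
  rw [W2sq_gaussian, W2sq_gaussian]
  have ca : (((σa ^ 2 + pa ^ 2 * σγ ^ 2).toNNReal : ℝ≥0) : ℝ) = σa ^ 2 + pa ^ 2 * σγ ^ 2 :=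
    Real.coe_toNNReal _ (by positivity)
  have cb : (((σb ^ 2 + pb ^ 2 * σγ ^ 2).toNNReal : ℝ≥0) : ℝ) = σb ^ 2 + pb ^ 2 * σγ ^ 2 :=
    Real.coe_toNNReal _ (by positivity)
  have da : (((σa ^ 2).toNNReal : ℝ≥0) : ℝ) = σa ^ 2 := Real.coe_toNNReal _ (by positivity)
  have db : (((σb ^ 2).toNNReal : ℝ≥0) : ℝ) = σb ^ 2 := Real.coe_toNNReal _ (by positivity)
  rw [ca, cb, da, db, Real.sqrt_sq hσa, Real.sqrt_sq hσb]
  set sA := Real.sqrt (σa ^ 2 + pa ^ 2 * σγ ^ 2) with hsA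
  set sB := Real.sqrt (σb ^ 2 + pb ^ 2 * σγ ^ 2) with hsB
  have hA : sA ^ 2 = σa ^ 2 + pa ^ 2 * σγ ^ 2 := Real.sq_sqrt (by positivity)
  have hB : sB ^ 2 = σb ^ 2 + pb ^ 2 * σγ ^ 2 := Real.sq_sqrt (by positivity)
  have hA0 : 0 ≤ sA := Real.sqrt_nonneg _
  have hB0 : 0 ≤ sB := Real.sqrt_nonneg _
  have hc : 0 ≤ σa * σb + pa * pb * σγ ^ 2 :=
    add_nonneg (mul_nonneg hσa hσb)
      (mul_nonneg (mul_nonneg hpa.1 hpb.1) (sq_nonneg σγ))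
  have key : σa * σb + pa * pb * σγ ^ 2 ≤ sA * sB := by
    nlinarith [hA, hB, hc, hA0, hB0, sq_nonneg (σa * pb * σγ - σb * pa * σγ),
      mul_nonneg hA0 hB0]
  nlinarith [key, hA, hB]
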